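/- Every exceptional Krall polynomial t̂_{n+1}(x;b) = (b² − 2n)(x+b)h_n(x) − b·h_n(x) − n·h_{n-1}(x) satisfies the one-point condition γ_b(t̂_{n+1}) = 0, where γ_b(p) = p'(−b) + b·p(−b). -/
import Mathlib


/-- Monic Hermite polynomials. -/
noncomputable def hermiteMonic (n : ℕ) : Polynomial ℝ :=
  ∑ j ∈ Finset.range (n / 2 + 1),
    Polynomial.C ((n.factorial : ℝ) / ((n - 2 * j).factorial * j.factorial) * (-(1:ℝ)/4) ^ j) *
      Polynomial.X ^ (n - 2 * j)

open Polynomial Finset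

noncomputable def hc (n j : ℕ) : ℝ :=
  (n.factorial : ℝ) / ((n - 2 * j).factorial * j.factorial) * (-(1:ℝ)/4) ^ j

lemma hermiteMonic_eq (n : ℕ) :
    hermiteMonic n = ∑ j ∈ Finset.range (n / 2 + 1), C (hc n j) * X ^ (n - 2 * j) := rfl

lemma hc_zero (n : ℕ) : hc n 0 = 1 := by
  simp [hc, Nat.factorial_ne_zero]

lemma hc_key {n j : ℕ} (h : 2 * (j + 1) ≤ n) :
    hc (n+1) (j+1) = hc n (j+1) - hc n j * ((n - 2*j : ℕ) : ℝ) / 2 := by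
  obtain ⟨k, hk⟩ : ∃ k, n = k + 2*j + 2 := ⟨n - 2*j - 2, by omega⟩
  subst hk
  simp only [hc]
  have e1 : k + 2*j + 2 - 2*(j+1) = k := by omega
  have e2 : k + 2*j + 2 - 2*j = k + 2 := by omega
  have e3 : k + 2*j + 2 + 1 - 2*(j+1) = k + 1 := by omega
  rw [e1, e2, e3]
  rw [show k + 2*j + 2 + 1 = (k + 2*j + 2) + 1 from rfl,
    Nat.factorial_succ (k + 2*j + 2),
    show k + 2 = (k+1)+1 from rfl, Nat.factorial_succ (k+1), Nat.factorial_succ k,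
    Nat.factorial_succ j]
  have h1 : (k.factorial : ℝ) ≠ 0 := Nat.cast_ne_zero.mpr (Nat.factorial_ne_zero k)
  have h2 : (j.factorial : ℝ) ≠ 0 := Nat.cast_ne_zero.mpr (Nat.factorial_ne_zero j)
  have h3 : ((k+1 : ℕ) : ℝ) ≠ 0 := by positivity
  have h4 : ((j+1 : ℕ) : ℝ) ≠ 0 := by positivity
  push_cast
  field_simp
  ring

lemma hc_boundary (m : ℕ) :
    hc (2*m+2) (m+1) = - (hc (2*m+1) m * (((2*m+1) - 2*m : ℕ) : ℝ) / 2) := by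
  simp only [hc]
  have e1 : 2*m+2 - 2*(m+1) = 0 := by omega
  have e2 : 2*m+1 - 2*m = 1 := by omega
  rw [e1, e2]
  rw [show 2*m+2 = (2*m+1)+1 from rfl, Nat.factorial_succ (2*m+1), Nat.factorial_succ m]
  have h1 : ((2*m+1).factorial : ℝ) ≠ 0 := Nat.cast_ne_zero.mpr (Nat.factorial_ne_zero _)
  have h2 : (m.factorial : ℝ) ≠ 0 := Nat.cast_ne_zero.mpr (Nat.factorial_ne_zero m)
  have h4 : ((m+1 : ℕ) : ℝ) ≠ 0 := by positivity
  push_cast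
  rw [Nat.factorial_zero]
  field_simp
  ring

lemma hermiteMonic_succ (n : ℕ) :
    hermiteMonic (n+1)
      = X * hermiteMonic n - C (1/2 : ℝ) * derivative (hermiteMonic n) := by
  have hder : C (1/2 : ℝ) * derivative (hermiteMonic n)
      = ∑ j ∈ Finset.range (n/2 + 1),
          C (hc n j * ((n - 2*j : ℕ) : ℝ) / 2) * X ^ (n - 2*j - 1) := by
    rw [hermiteMonic_eq, derivative_sum, Finset.mul_sum]
    refine Finset.sum_congr rfl fun j _ => ?_
    rw [derivative_C_mul_X_pow, ← mul_assoc, ← C_mul]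
    congr 1
    ring
  have hX : X * hermiteMonic n
      = ∑ j ∈ Finset.range (n/2+1), C (hc n j) * X ^ (n - 2*j + 1) := by
    rw [hermiteMonic_eq, Finset.mul_sum]
    refine Finset.sum_congr rfl fun j _ => ?_
    ring
  rw [hX, hder, hermiteMonic_eq]
  rcases Nat.even_or_odd n with he | ho
  · obtain ⟨m, hm⟩ := he
    have hm' : n = 2*m := by omega
    subst hm'
    have d1 : (2*m+1)/2 = m := by omega
    have d2 : (2*m)/2 = m := by omega
    rw [d1, d2, Finset.sum_range_succ
      (fun j => C (hc (2*m) j * (((2*m) - 2*j : ℕ):ℝ) / 2) * X ^ ((2*m) - 2*j - 1)) m]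
    have hz : C (hc (2*m) m * (((2*m) - 2*m : ℕ):ℝ) / 2) * X ^ ((2*m) - 2*m - 1) = 0 := by
      simp
    rw [hz, add_zero,
      Finset.sum_range_succ' (fun j => C (hc (2*m+1) j) * X ^ (2*m+1 - 2*j)) m,
      Finset.sum_range_succ' (fun j => C (hc (2*m) j) * X ^ (2*m - 2*j + 1)) m]
    have key : ∑ j ∈ Finset.range m, C (hc (2*m+1) (j+1)) * X ^ (2*m+1 - 2*(j+1))
        = ∑ j ∈ Finset.range m,
            (C (hc (2*m) (j+1)) * X ^ (2*m - 2*(j+1) + 1)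
              - C (hc (2*m) j * (((2*m) - 2*j : ℕ):ℝ) / 2) * X ^ ((2*m) - 2*j - 1)) := by
      refine Finset.sum_congr rfl fun j hj => ?_
      have hj' : j < m := Finset.mem_range.mp hj
      have e1 : 2*m+1 - 2*(j+1) = 2*m - 2*j - 1 := by omega
      have e2 : 2*m - 2*(j+1) + 1 = 2*m - 2*j - 1 := by omega
      rw [e1, e2, hc_key (by omega : 2*(j+1) ≤ 2*m), C_sub, sub_mul]
    rw [key, Finset.sum_sub_distrib, hc_zero, hc_zero]
    have e3 : 2*m+1 - 2*0 = 2*m+1 := by omega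
    have e4 : 2*m - 2*0 + 1 = 2*m+1 := by omega
    rw [e3, e4]
    abel
  · obtain ⟨m, hm⟩ := ho
    subst hm
    have d1 : (2*m+1+1)/2 = m+1 := by omega
    have d2 : (2*m+1)/2 = m := by omega
    rw [d1, d2]
    -- peel last term of LHS (j = m+1) and last term of derivative sum (j = m)
    rw [Finset.sum_range_succ
      (fun j => C (hc (2*m+1+1) j) * X ^ (2*m+1+1 - 2*j)) (m+1),
      Finset.sum_range_succ
      (fun j => C (hc (2*m+1) j * (((2*m+1) - 2*j : ℕ):ℝ) / 2) * X ^ ((2*m+1) - 2*j - 1)) m]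
    have hb : C (hc (2*m+1+1) (m+1)) * X ^ (2*m+1+1 - 2*(m+1))
        = - (C (hc (2*m+1) m * (((2*m+1) - 2*m : ℕ):ℝ) / 2) * X ^ ((2*m+1) - 2*m - 1)) := by
      have e1 : 2*m+1+1 - 2*(m+1) = 0 := by omega
      have e2 : 2*m+1 - 2*m - 1 = 0 := by omega
      rw [e1, e2, show (2*m+1+1) = 2*m+2 from rfl, hc_boundary m, map_neg, neg_mul]
    rw [hb,
      Finset.sum_range_succ' (fun j => C (hc (2*m+1+1) j) * X ^ (2*m+1+1 - 2*j)) m,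
      Finset.sum_range_succ' (fun j => C (hc (2*m+1) j) * X ^ (2*m+1 - 2*j + 1)) m]
    have key : ∑ j ∈ Finset.range m, C (hc (2*m+1+1) (j+1)) * X ^ (2*m+1+1 - 2*(j+1))
        = ∑ j ∈ Finset.range m,
            (C (hc (2*m+1) (j+1)) * X ^ (2*m+1 - 2*(j+1) + 1)
              - C (hc (2*m+1) j * (((2*m+1) - 2*j : ℕ):ℝ) / 2) * X ^ ((2*m+1) - 2*j - 1)) := by
      refine Finset.sum_congr rfl fun j hj => ?_
      have hj' : j < m := Finset.mem_range.mp hj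
      have e1 : 2*m+1+1 - 2*(j+1) = 2*m+1 - 2*j - 1 := by omega
      have e2 : 2*m+1 - 2*(j+1) + 1 = 2*m+1 - 2*j - 1 := by omega
      rw [e1, e2, hc_key (by omega : 2*(j+1) ≤ 2*m+1), C_sub, sub_mul]
    rw [key, Finset.sum_sub_distrib, hc_zero, hc_zero]
    have e3 : 2*m+1+1 - 2*0 = 2*m+2 := by omega
    have e4 : 2*m+1 - 2*0 + 1 = 2*m+2 := by omega
    rw [e3, e4]
    abel

lemma hermiteMonic_zero : hermiteMonic 0 = 1 := by
  rw [hermiteMonic_eq]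
  simp [hc_zero]

lemma derivative_hermiteMonic (n : ℕ) :
    derivative (hermiteMonic (n+1)) = C ((n:ℝ)+1) * hermiteMonic n := by
  induction n with
  | zero =>
    rw [hermiteMonic_succ, hermiteMonic_zero]
    simp
  | succ m ih =>
    rw [hermiteMonic_succ (m+1), derivative_sub, derivative_mul, derivative_X,
      derivative_C_mul, ih, derivative_C_mul]
    push_cast
    simp only [C_add, C_1]
    linear_combination (-(Polynomial.C (m:ℝ) + 1)) * (hermiteMonic_succ m)

lemma hermiteMonic_rec (n : ℕ) :
    hermiteMonic (n+2) = X * hermiteMonic (n+1) - C (((n:ℝ)+1)/2) * hermiteMonic n := by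
  rw [show n+2 = (n+1)+1 from rfl, hermiteMonic_succ (n+1), derivative_hermiteMonic n]
  congr 1
  rw [← mul_assoc, ← C_mul]
  congr 1
  ring

lemma hermiteMonic_one : hermiteMonic 1 = X := by
  rw [show (1:ℕ) = 0+1 from rfl, hermiteMonic_succ, hermiteMonic_zero]
  simp

/-- Exceptional Krall polynomial t̂_{n+1}(x;b). -/
noncomputable def krall (b : ℝ) (n : ℕ) : Polynomial ℝ :=
  Polynomial.C (b ^ 2 - 2 * n) * (Polynomial.X + Polynomial.C b) * hermiteMonic n
    - Polynomial.C b * hermiteMonic n - Polynomial.C (n : ℝ) * hermiteMonic (n - 1)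

theorem krall_one_point_condition (b : ℝ) (n : ℕ) :
    (Polynomial.derivative (krall b n)).eval (-b) + b * (krall b n).eval (-b) = 0 := by
  cases n with
  | zero =>
    simp [krall, hermiteMonic_zero]
    ring
  | succ m =>
    have hd1 : (derivative (hermiteMonic (m+1))).eval (-b)
        = ((m:ℝ)+1) * (hermiteMonic m).eval (-b) := by
      rw [derivative_hermiteMonic]; simp
    have hd0 : (derivative (hermiteMonic m)).eval (-b)
        = (m:ℝ) * (hermiteMonic (m-1)).eval (-b) := by
      cases m with
      | zero => simp [hermiteMonic_zero]
      | succ k =>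
        rw [derivative_hermiteMonic]
        simp
    have hrec : (hermiteMonic (m+1)).eval (-b)
        = -b * (hermiteMonic m).eval (-b) - (m:ℝ)/2 * (hermiteMonic (m-1)).eval (-b) := by
      cases m with
      | zero => simp [hermiteMonic_zero, hermiteMonic_one]
      | succ k =>
        rw [show k+1+1 = k+2 from rfl, hermiteMonic_rec k]
        simp
    simp only [krall, derivative_sub, derivative_mul, derivative_add, derivative_C,
      derivative_X, eval_sub, eval_mul, eval_add, eval_C, eval_X, eval_one, zero_mul,
      mul_zero, zero_add, add_zero, one_mul, Nat.add_sub_cancel]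
    rw [hd1, hd0]
    push_cast
    linear_combination (-2*((m:ℝ)+1)) * hrec
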